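/- For a monic real quadratic λ² + bλ + c: both roots have strictly negative real part if and only if b > 0 and c > 0 (Routh–Hurwitz criterion in degree 2). Applying this to H(λ) = λ² + (m12/A + m21/A - r1 - r2)λ + (r1 r2 - m12 r1/A - m21 r2/A), stability of the origin would require m12 < A r2 - m21 r2/r1 and m12 > A(r1 + r2) - m21 simultaneously; these two inequalities together with m12 > 0 imply -m21 r2/r1 > 0, a contradiction for positive parameters. -/

import Mathlib

/-- Routh–Hurwitz in degree 2: a monic real quadratic `λ² + bλ + c` has both
roots with strictly negative real part iff `b > 0` and `c > 0`. Applied to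
`H(λ)` at the origin of the general two-patch model, the two resulting
inequalities `A(r1+r2) - m21 < m12` and `m12 < A r2 - m21 r2/r1` cannot hold
simultaneously for positive parameters. -/
theorem stmt_17 (m12 m21 r1 r2 A : ℝ)
    (hm12 : 0 < m12) (hm21 : 0 < m21) (hr1 : 0 < r1) (hr2 : 0 < r2) (hA : 0 < A) :
    (∀ b c : ℝ,
      (∀ z : ℂ, z ^ 2 + (b : ℂ) * z + (c : ℂ) = 0 → z.re < 0) ↔ (0 < b ∧ 0 < c)) ∧
    ¬(A * (r1 + r2) - m21 < m12 ∧ m12 < A * r2 - m21 * r2 / r1) := by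
  constructor
  · intro b c
    constructor
    · intro h
      obtain ⟨s, hs⟩ : ∃ s : ℂ, s ^ 2 = (b : ℂ) ^ 2 - 4 * (c : ℂ) :=
        IsAlgClosed.exists_pow_nat_eq ((b : ℂ) ^ 2 - 4 * (c : ℂ)) (n := 2) (by norm_num)
      set z1 : ℂ := (-(b : ℂ) + s) / 2 with hz1
      set z2 : ℂ := (-(b : ℂ) - s) / 2 with hz2
      have h1 : z1.re < 0 := h z1 (by rw [hz1]; field_simp; linear_combination hs)
      have h2 : z2.re < 0 := h z2 (by rw [hz2]; field_simp; linear_combination hs)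
      have hsum : z1 + z2 = -(b : ℂ) := by rw [hz1, hz2]; ring
      have hprod : z1 * z2 = (c : ℂ) := by
        rw [hz1, hz2]; field_simp; linear_combination -hs
      have hb : z1.re + z2.re = -b := by
        have := congrArg Complex.re hsum; simpa using this
      have hc : z1.re * z2.re - z1.im * z2.im = c := by
        have := congrArg Complex.re hprod; simpa [Complex.mul_re] using this
      have him : z1.im = -z2.im := by
        have : z1.im + z2.im = 0 := by
          have := congrArg Complex.im hsum; simpa using this
        linarith
      constructor
      · linarith
      · rw [← hc, him]; nlinarith [sq_nonneg z2.im]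
    · rintro ⟨hb, hc⟩ z hz
      by_contra hre
      push_neg at hre
      have hRe : z.re ^ 2 - z.im ^ 2 + b * z.re + c = 0 := by
        have := congrArg Complex.re hz
        simpa [Complex.add_re, Complex.mul_re, pow_two, Complex.mul_im] using this
      have hIm : 2 * z.re * z.im + b * z.im = 0 := by
        have := congrArg Complex.im hz
        simp [Complex.add_im, Complex.mul_im, pow_two, Complex.mul_re] at this
        linarith
      have hy : z.im = 0 := by
        rcases mul_eq_zero.1 (show (2 * z.re + b) * z.im = 0 by linarith) with h | h
        · nlinarith
        · exact h
      rw [hy] at hRe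
      nlinarith
  · rintro ⟨h1, h2⟩
    have hdiv : m21 * r2 / r1 * r1 = m21 * r2 := by field_simp
    have h3 : 0 < A * r2 - m21 * r2 / r1 := lt_trans hm12 h2
    nlinarith [mul_pos hA hr1, mul_pos hm21 hr2, mul_lt_mul_of_pos_right h2 hr1,
      mul_lt_mul_of_pos_right h1 hr1, mul_lt_mul_of_pos_right h3 hr1]
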